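/- Let Γ ⊊ ℝ^n be an open convex symmetric cone containing the positive orthant Γ_n. Then Γ is contained in the half-space Γ_1 = {x ∈ ℝ^n : x_1 + ... + x_n > 0}. -/

import Mathlib

theorem admissible_cone_subset_halfspace (n : ℕ) (Γ : Set (Fin n → ℝ))
    (hopen : IsOpen Γ) (hconv : Convex ℝ Γ) (hne : Γ ≠ Set.univ)
    (hcone : ∀ x ∈ Γ, ∀ t : ℝ, 0 < t → t • x ∈ Γ)
    (hsymm : ∀ σ : Equiv.Perm (Fin n), ∀ x ∈ Γ, (fun i => x (σ i)) ∈ Γ)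
    (horthant : {x : Fin n → ℝ | ∀ i, 0 < x i} ⊆ Γ) :
    Γ ⊆ {x : Fin n → ℝ | 0 < ∑ i, x i} := by
  intro x hx
  by_contra hs
  simp only [Set.mem_setOf_eq, not_lt] at hs
  apply hne
  rcases Nat.eq_zero_or_pos n with h0 | hn
  · ext y
    simp only [Set.mem_univ, iff_true]
    exact horthant (fun i => absurd i.2 (by omega))
  have hadd : ∀ u ∈ Γ, ∀ v ∈ Γ, u + v ∈ Γ := by
    intro u hu v hv
    have h2 : (1/2:ℝ) • u + (1/2:ℝ) • v ∈ Γ :=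
      hconv hu hv (by norm_num) (by norm_num) (by norm_num)
    have := hcone _ h2 2 (by norm_num)
    simpa [smul_add, smul_smul] using this
  set C : Fin n → ℝ := ∑ σ : Equiv.Perm (Fin n), (fun i => x (σ i)) with hCdef
  have hsum : ∀ s : Finset (Equiv.Perm (Fin n)), s.Nonempty →
      (∑ σ ∈ s, (fun i => x (σ i))) ∈ Γ := by
    intro s hs
    induction hs using Finset.Nonempty.cons_induction with
    | singleton a => simpa using hsymm a x hx
    | cons a s ha hs ih =>
      rw [Finset.sum_cons]
      exact hadd _ (hsymm a x hx) _ ih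
  have hCmem : C ∈ Γ := hsum Finset.univ Finset.univ_nonempty
  have hCi : ∀ i, C i = ∑ σ : Equiv.Perm (Fin n), x (σ i) := by
    intro i; simp [hCdef, Finset.sum_apply]
  have hconst : ∀ i j, C i = C j := by
    intro i j
    rw [hCi, hCi]
    refine Fintype.sum_equiv (Equiv.mulRight (Equiv.swap i j))
      (fun σ => x (σ i)) (fun σ => x (σ j)) ?_
    intro σ
    simp [Equiv.Perm.mul_apply]
  have hv : ∀ i, C i ≤ 0 := by
    intro i
    have h1 : ∑ j, C j = (n : ℝ) * C i := by
      rw [Finset.sum_congr rfl (fun j _ => hconst j i)]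
      simp [mul_comm]
    have h2 : ∑ j, C j = (Fintype.card (Equiv.Perm (Fin n)) : ℝ) * ∑ j, x j := by
      simp only [hCi]
      rw [Finset.sum_comm]
      rw [Finset.sum_congr rfl (fun σ _ => Equiv.sum_comp σ x)]
      simp [mul_comm]
    have hcard : (0:ℝ) < (Fintype.card (Equiv.Perm (Fin n)) : ℝ) := by
      exact_mod_cast Fintype.card_pos
    have hn' : (0:ℝ) < (n:ℝ) := by exact_mod_cast hn
    nlinarith [mul_nonneg hcard.le (neg_nonneg.2 hs)]
  obtain ⟨δ, hδ, hball⟩ := Metric.isOpen_iff.1 hopen C hCmem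
  set C' : Fin n → ℝ := fun i => C i - δ/2 with hC'def
  have hC'mem : C' ∈ Γ := by
    apply hball
    rw [Metric.mem_ball, dist_pi_lt_iff hδ]
    intro i
    rw [Real.dist_eq]
    simp [hC'def]
    rw [abs_of_pos (by linarith)]
    linarith
  have hC'neg : ∀ i, C' i ≤ -(δ/2) := fun i => by
    have := hv i; simp [hC'def]; linarith
  ext y
  simp only [Set.mem_univ, iff_true]
  set M : ℝ := 1 + ∑ i, |y i| with hM
  have hMpos : 0 < M := by
    have : 0 ≤ ∑ i, |y i| := Finset.sum_nonneg (fun i _ => abs_nonneg _)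
    simp [hM]; linarith
  have hMy : ∀ i, |y i| < M := by
    intro i
    have h1 : |y i| ≤ ∑ j, |y j| :=
      Finset.single_le_sum (fun j _ => abs_nonneg (y j)) (Finset.mem_univ i)
    simp [hM]; linarith
  set t : ℝ := 2 * M / δ with ht
  have htpos : 0 < t := by positivity
  have hkey : y = t • C' + (y - t • C') := by ring_nf
  rw [hkey]
  refine hadd _ (hcone _ hC'mem t htpos) _ (horthant ?_)
  intro i
  simp only [Set.mem_setOf_eq, Pi.sub_apply, Pi.smul_apply, smul_eq_mul]
  have h2 : t * (δ/2) = M := by rw [ht]; field_simp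
  have h1 : t * C' i ≤ -M := by
    calc t * C' i ≤ t * (-(δ/2)) := mul_le_mul_of_nonneg_left (hC'neg i) htpos.le
    _ = -(t * (δ/2)) := by ring
    _ = -M := by rw [h2]
  have h3 := abs_lt.1 (hMy i)
  linarith [h3.1]
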